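/- If B₀, B₁ are Hermitian unitary operators on a finite-dimensional Hilbert space such that B₀ + B₁ and B₀ - B₁ are both invertible, then X' = (B₀+B₁)|B₀+B₁|⁻¹ and Z' = (B₀-B₁)|B₀-B₁|⁻¹ are Hermitian unitary and anticommute: X'Z' + Z'X' = 0, where |M| = √(M†M). -/

import Mathlib

open Matrix
open scoped ComplexOrder

/-- The positive semidefinite square root of a positive semidefinite matrix
(the definition `Matrix.PosSemidef.sqrt` of the older Mathlib, removed since). -/
noncomputable def Matrix.PosSemidef.sqrt {n 𝕜 : Type*} [Fintype n] [RCLike 𝕜] [DecidableEq n]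
    {A : Matrix n n 𝕜} (hA : A.PosSemidef) : Matrix n n 𝕜 :=
  hA.1.eigenvectorUnitary.1 * diagonal ((↑) ∘ (√·) ∘ hA.1.eigenvalues) *
  (star hA.1.eigenvectorUnitary : Matrix n n 𝕜)

open scoped MatrixOrder in
lemma Matrix.PosSemidef.sqrt_eq_cfcSqrt {d : ℕ} {A : Matrix (Fin d) (Fin d) ℂ}
    (hA : A.PosSemidef) : hA.sqrt = CFC.sqrt A := by
  rw [CFC.sqrt_eq_cfc, cfc_nnreal_eq_real _ A, hA.1.cfc_eq]
  simp only [IsHermitian.cfc, Matrix.PosSemidef.sqrt, Unitary.conjStarAlgAut_apply]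
  congr 3
  funext i
  simp [Real.coe_sqrt, Real.coe_toNNReal', hA.eigenvalues_nonneg i]

open scoped MatrixOrder in
lemma Matrix.PosSemidef.posSemidef_sqrt {d : ℕ} {A : Matrix (Fin d) (Fin d) ℂ}
    (hA : A.PosSemidef) : hA.sqrt.PosSemidef := by
  rw [hA.sqrt_eq_cfcSqrt]; exact (CFC.sqrt_nonneg A).posSemidef

open scoped MatrixOrder in
lemma Matrix.PosSemidef.sqrt_mul_self {d : ℕ} {A : Matrix (Fin d) (Fin d) ℂ}
    (hA : A.PosSemidef) : hA.sqrt * hA.sqrt = A := by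
  rw [hA.sqrt_eq_cfcSqrt]; exact CFC.sqrt_mul_sqrt_self A hA.nonneg

open scoped MatrixOrder in
lemma Matrix.PosSemidef.eq_sqrt_of_sq_eq {d : ℕ} {A B : Matrix (Fin d) (Fin d) ℂ}
    (hB : B.PosSemidef) (hA : A.PosSemidef) (h : B ^ 2 = A) : B = hA.sqrt := by
  rw [hA.sqrt_eq_cfcSqrt]; exact (CFC.sqrt_unique (by rw [← sq]; exact h) hB.nonneg).symm

private lemma commute_sqrt {d : ℕ} {A U : Matrix (Fin d) (Fin d) ℂ} (hA : A.PosSemidef)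
    (hU : Uᴴ = U) (hUu : U * U = 1) (hcomm : U * A = A * U) :
    U * hA.sqrt = hA.sqrt * U := by
  set P := hA.sqrt with hPdef
  have hC : (Uᴴ * P * U).PosSemidef := hA.posSemidef_sqrt.conjTranspose_mul_mul_same U
  have hsq : (Uᴴ * P * U) ^ 2 = A := by
    rw [hU, pow_two]
    have h1 : U * P * U * (U * P * U) = U * (P * (U * U) * P) * U := by noncomm_ring
    rw [h1, hUu, mul_one, hA.sqrt_mul_self, hcomm, Matrix.mul_assoc, hUu, mul_one]
  have hEq : Uᴴ * P * U = hA.sqrt := hC.eq_sqrt_of_sq_eq hA hsq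
  rw [hU] at hEq
  calc U * P = U * P * (U * U) := by rw [hUu, mul_one]
    _ = (U * P * U) * U := by noncomm_ring
    _ = P * U := by rw [hEq]

private lemma inv_comm {d : ℕ} {P X : Matrix (Fin d) (Fin d) ℂ} (hP : IsUnit P.det)
    (h : X * P = P * X) : X * P⁻¹ = P⁻¹ * X := by
  have h1 := congrArg (fun M => P⁻¹ * M * P⁻¹) h
  have l : P⁻¹ * (X * P) * P⁻¹ = P⁻¹ * X := by
    rw [Matrix.mul_assoc, Matrix.mul_assoc, Matrix.mul_nonsing_inv _ hP, mul_one]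
  have r : P⁻¹ * (P * X) * P⁻¹ = X * P⁻¹ := by
    rw [← Matrix.mul_assoc P⁻¹ P X, Matrix.nonsing_inv_mul _ hP, one_mul]
  rw [l, r] at h1
  exact h1.symm

private lemma comm_sq_add {d : ℕ} (A B : Matrix (Fin d) (Fin d) ℂ)
    (hA : A * A = 1) (hB : B * B = 1) :
    A * ((A + B) * (A + B)) = ((A + B) * (A + B)) * A := by
  have e1 : A * ((A + B) * (A + B)) = (A * A) * A + (A * A) * B + A * (B * A) + A * (B * B) := by
    noncomm_ring
  have e2 : ((A + B) * (A + B)) * A = A * (A * A) + A * (B * A) + B * (A * A) + (B * B) * A := by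
    noncomm_ring
  rw [e1, e2, hA, hB]
  noncomm_ring

private lemma comm_sq_sub {d : ℕ} (A B : Matrix (Fin d) (Fin d) ℂ)
    (hA : A * A = 1) (hB : B * B = 1) :
    A * ((A - B) * (A - B)) = ((A - B) * (A - B)) * A := by
  have e1 : A * ((A - B) * (A - B)) = (A * A) * A - (A * A) * B - A * (B * A) + A * (B * B) := by
    noncomm_ring
  have e2 : ((A - B) * (A - B)) * A = A * (A * A) - A * (B * A) - B * (A * A) + (B * B) * A := by
    noncomm_ring
  rw [e1, e2, hA, hB]
  noncomm_ring

private lemma anti_sum_diff {d : ℕ} (A B : Matrix (Fin d) (Fin d) ℂ)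
    (hA : A * A = 1) (hB : B * B = 1) :
    (A + B) * (A - B) = -((A - B) * (A + B)) := by
  have e : (A + B) * (A - B) + (A - B) * (A + B) = (A * A) + (A * A) - (B * B) - (B * B) := by
    noncomm_ring
  rw [hA, hB] at e
  have e0 : (A + B) * (A - B) + (A - B) * (A + B) = 0 := by rw [e]; abel
  exact eq_neg_of_add_eq_zero_left e0

private lemma herm_unit_polar {d : ℕ} {S P : Matrix (Fin d) (Fin d) ℂ}
    (hS : Sᴴ = S) (hP : Pᴴ = P) (hPdet : IsUnit P.det)
    (hPP : P * P = S * S) (hSP : S * P = P * S) :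
    ((S * P⁻¹)ᴴ = S * P⁻¹) ∧ (S * P⁻¹) * (S * P⁻¹) = 1 := by
  have hinv : S * P⁻¹ = P⁻¹ * S := inv_comm hPdet hSP
  constructor
  · rw [Matrix.conjTranspose_mul, Matrix.conjTranspose_nonsing_inv, hP, hS]
    exact hinv.symm
  · calc S * P⁻¹ * (S * P⁻¹) = S * (P⁻¹ * S) * P⁻¹ := by noncomm_ring
      _ = S * (S * P⁻¹) * P⁻¹ := by rw [hinv]
      _ = (S * S) * (P⁻¹ * P⁻¹) := by noncomm_ring
      _ = (P * P) * (P * P)⁻¹ := by rw [← hPP, Matrix.mul_inv_rev]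
      _ = 1 := Matrix.mul_nonsing_inv _ (by rw [Matrix.det_mul]; exact hPdet.mul hPdet)

theorem bob_operators_anticommute {d : ℕ}
    (B₀ B₁ : Matrix (Fin d) (Fin d) ℂ)
    (hB₀ : B₀.IsHermitian) (hB₁ : B₁.IsHermitian)
    (hB₀u : B₀ * B₀ = 1) (hB₁u : B₁ * B₁ = 1)
    (hsum : IsUnit (B₀ + B₁)) (hdiff : IsUnit (B₀ - B₁)) :
    let absSum := (Matrix.posSemidef_conjTranspose_mul_self (B₀ + B₁)).sqrt
    let absDiff := (Matrix.posSemidef_conjTranspose_mul_self (B₀ - B₁)).sqrt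
    let X' := (B₀ + B₁) * absSum⁻¹
    let Z' := (B₀ - B₁) * absDiff⁻¹
    X'.IsHermitian ∧ X' * X' = 1 ∧ Z'.IsHermitian ∧ Z' * Z' = 1 ∧
      X' * Z' + Z' * X' = 0 := by
  intro absSum absDiff X' Z'
  set S := B₀ + B₁ with hSdef
  set D := B₀ - B₁ with hDdef
  have hSh : Sᴴ = S := (hB₀.add hB₁).eq
  have hDh : Dᴴ = D := (hB₀.sub hB₁).eq
  -- square roots
  have hPh : absSumᴴ = absSum :=
    (Matrix.posSemidef_conjTranspose_mul_self S).posSemidef_sqrt.isHermitian.eq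
  have hQh : absDiffᴴ = absDiff :=
    (Matrix.posSemidef_conjTranspose_mul_self D).posSemidef_sqrt.isHermitian.eq
  have hPP : absSum * absSum = S * S := by
    exact (Matrix.posSemidef_conjTranspose_mul_self S).sqrt_mul_self.trans
      (congrArg (fun M => M * S) hSh)
  have hQQ : absDiff * absDiff = D * D := by
    exact (Matrix.posSemidef_conjTranspose_mul_self D).sqrt_mul_self.trans
      (congrArg (fun M => M * D) hDh)
  -- commutation of B₀, B₁ with the square roots
  have h0 : B₀ * absSum = absSum * B₀ := by
    refine commute_sqrt _ hB₀.eq hB₀u ?_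
    rw [hSh]; exact comm_sq_add B₀ B₁ hB₀u hB₁u
  have h1 : B₁ * absSum = absSum * B₁ := by
    refine commute_sqrt _ hB₁.eq hB₁u ?_
    rw [hSh]
    have h := comm_sq_add B₁ B₀ hB₁u hB₀u
    rwa [add_comm B₁ B₀] at h
  have h0' : B₀ * absDiff = absDiff * B₀ := by
    refine commute_sqrt _ hB₀.eq hB₀u ?_
    rw [hDh]; exact comm_sq_sub B₀ B₁ hB₀u hB₁u
  have h1' : B₁ * absDiff = absDiff * B₁ := by
    refine commute_sqrt _ hB₁.eq hB₁u ?_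
    rw [hDh]
    have hswap : (B₁ - B₀) * (B₁ - B₀) = (B₀ - B₁) * (B₀ - B₁) := by noncomm_ring
    have h := comm_sq_sub B₁ B₀ hB₁u hB₀u
    rwa [hswap] at h
  have hSP : S * absSum = absSum * S := by rw [hSdef, add_mul, mul_add, h0, h1]
  have hDP : D * absSum = absSum * D := by rw [hDdef, sub_mul, mul_sub, h0, h1]
  have hDQ : D * absDiff = absDiff * D := by rw [hDdef, sub_mul, mul_sub, h0', h1']
  -- invertibility of the square roots
  have hPdet : IsUnit absSum.det := by
    have h : absSum.det * absSum.det = (S * S).det := by rw [← Matrix.det_mul, hPP]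
    have hu : IsUnit ((S * S).det) := (Matrix.isUnit_iff_isUnit_det _).mp (hsum.mul hsum)
    rw [← h] at hu
    exact isUnit_of_mul_isUnit_left hu
  have hQdet : IsUnit absDiff.det := by
    have h : absDiff.det * absDiff.det = (D * D).det := by rw [← Matrix.det_mul, hQQ]
    have hu : IsUnit ((D * D).det) := (Matrix.isUnit_iff_isUnit_det _).mp (hdiff.mul hdiff)
    rw [← h] at hu
    exact isUnit_of_mul_isUnit_left hu
  -- Hermitian-unitarity of X' and Z'
  have hX := herm_unit_polar hSh hPh hPdet hPP hSP
  have hZ := herm_unit_polar hDh hQh hQdet hQQ hDQ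
  -- anticommutation
  have hanti : S * D = -(D * S) := anti_sum_diff B₀ B₁ hB₀u hB₁u
  have hinvD : D * absSum⁻¹ = absSum⁻¹ * D := inv_comm hPdet hDP
  have hXD : (S * absSum⁻¹) * D = -(D * (S * absSum⁻¹)) := by
    calc (S * absSum⁻¹) * D = S * (absSum⁻¹ * D) := by rw [Matrix.mul_assoc]
      _ = S * (D * absSum⁻¹) := by rw [hinvD]
      _ = (S * D) * absSum⁻¹ := by rw [Matrix.mul_assoc]
      _ = (-(D * S)) * absSum⁻¹ := by rw [hanti]
      _ = -(D * (S * absSum⁻¹)) := by noncomm_ring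
  have hcommXQ : (S * absSum⁻¹) * (Dᴴ * D) = (Dᴴ * D) * (S * absSum⁻¹) := by
    rw [hDh]
    calc (S * absSum⁻¹) * (D * D) = ((S * absSum⁻¹) * D) * D := by noncomm_ring
      _ = (-(D * (S * absSum⁻¹))) * D := by rw [hXD]
      _ = -(D * ((S * absSum⁻¹) * D)) := by noncomm_ring
      _ = -(D * (-(D * (S * absSum⁻¹)))) := by rw [hXD]
      _ = (D * D) * (S * absSum⁻¹) := by noncomm_ring
  have hXQ : (S * absSum⁻¹) * absDiff = absDiff * (S * absSum⁻¹) :=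
    commute_sqrt _ hX.1 hX.2 hcommXQ
  have hXQi : (S * absSum⁻¹) * absDiff⁻¹ = absDiff⁻¹ * (S * absSum⁻¹) := inv_comm hQdet hXQ
  have hfinal : (S * absSum⁻¹) * (D * absDiff⁻¹) + (D * absDiff⁻¹) * (S * absSum⁻¹) = 0 := by
    have hXZ : (S * absSum⁻¹) * (D * absDiff⁻¹) = -((D * absDiff⁻¹) * (S * absSum⁻¹)) := by
      calc (S * absSum⁻¹) * (D * absDiff⁻¹) = ((S * absSum⁻¹) * D) * absDiff⁻¹ := by
            noncomm_ring
        _ = (-(D * (S * absSum⁻¹))) * absDiff⁻¹ := by rw [hXD]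
        _ = -(D * ((S * absSum⁻¹) * absDiff⁻¹)) := by noncomm_ring
        _ = -(D * (absDiff⁻¹ * (S * absSum⁻¹))) := by rw [hXQi]
        _ = -((D * absDiff⁻¹) * (S * absSum⁻¹)) := by rw [Matrix.mul_assoc]
    rw [hXZ]
    exact neg_add_cancel _
  exact ⟨hX.1, hX.2, hZ.1, hZ.2, hfinal⟩
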